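/- Let U be an n-dimensional real vector space with a complete flag (Fⱼ), W a subspace with jump set e, and Xⱼ ∈ Fⱼ \ Fⱼ₋₁. Then the family (Xⱼ + W)_{j ∈ e} is a basis of the quotient space U/W. -/

import Mathlib

open Module in
/-- With a complete flag `(Fⱼ)`, a subspace `W` with jump set `e`,
and `Xⱼ ∈ Fⱼ \ Fⱼ₋₁`: the family `(Xⱼ + W)_{j ∈ e}` is a basis of `U/W`
(linearly independent and spanning). -/
theorem stmt_8 {U : Type*} [AddCommGroup U] [Module ℝ U] [FiniteDimensional ℝ U]
    (n : ℕ) (hn : finrank ℝ U = n)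
    (F : ℕ → Submodule ℝ U)
    (hdim : ∀ j ≤ n, finrank ℝ (F j) = j)
    (hmono : ∀ j < n, F j ≤ F (j + 1))
    (htop : F n = ⊤)
    (W : Submodule ℝ U)
    (X : ℕ → U)
    (hX : ∀ j, 1 ≤ j → j ≤ n → X j ∈ F j ∧ X j ∉ F (j - 1))
    (e : Set ℕ) (he : e = {j | 1 ≤ j ∧ j ≤ n ∧ ¬ F j ≤ W ⊔ F (j - 1)}) :
    LinearIndependent ℝ
      (fun j : e => (Submodule.Quotient.mk (X j) : U ⧸ W)) ∧
    Submodule.span ℝ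
      (Set.range fun j : e => (Submodule.Quotient.mk (X j) : U ⧸ W)) = ⊤ := by
  -- basic facts
  have hFmono : ∀ i j : ℕ, i ≤ j → j ≤ n → F i ≤ F j := by
    intro i j hij hjn
    induction j with
    | zero => simp [Nat.le_zero.mp hij]
    | succ k ih =>
      rcases Nat.lt_or_ge i (k + 1) with h | h
      · exact le_trans (ih (Nat.lt_succ_iff.mp h) (by omega)) (hmono k (by omega))
      · have : i = k + 1 := le_antisymm hij h
        subst this; exact le_rfl
  have hF0 : F 0 = ⊥ := Submodule.finrank_eq_zero.mp (hdim 0 (Nat.zero_le n))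
  -- F j = F (j-1) ⊔ span {X j}
  have hFeq : ∀ j, 1 ≤ j → j ≤ n → F j = F (j - 1) ⊔ Submodule.span ℝ {X j} := by
    intro j h1 hjn
    obtain ⟨hXm, hXnm⟩ := hX j h1 hjn
    have hle : F (j - 1) ⊔ Submodule.span ℝ {X j} ≤ F j :=
      sup_le (hFmono _ _ (by omega) hjn)
        ((Submodule.span_singleton_le_iff_mem _ _).mpr hXm)
    have hlt : F (j - 1) < F (j - 1) ⊔ Submodule.span ℝ {X j} := by
      refine lt_of_le_of_ne le_sup_left ?_
      intro hEq
      exact hXnm (hEq ▸ Submodule.mem_sup_right (Submodule.mem_span_singleton_self (X j)))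
    have h1' : finrank ℝ (F (j - 1)) < finrank ℝ ↥(F (j - 1) ⊔ Submodule.span ℝ {X j}) :=
      Submodule.finrank_lt_finrank_of_lt hlt
    have h2' : finrank ℝ ↥(F (j - 1) ⊔ Submodule.span ℝ {X j}) ≤ finrank ℝ (F j) :=
      Submodule.finrank_mono hle
    refine (Submodule.eq_of_le_of_finrank_le hle ?_).symm
    rw [hdim j hjn]
    have := hdim (j - 1) (by omega)
    omega
  -- key: for j in e, X j ∉ W ⊔ F (j - 1)
  have hkey : ∀ j ∈ e, X j ∉ W ⊔ F (j - 1) := by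
    intro j hj hmem
    rw [he] at hj
    obtain ⟨h1, hjn, hns⟩ := hj
    apply hns
    rw [hFeq j h1 hjn]
    exact sup_le le_sup_right ((Submodule.span_singleton_le_iff_mem _ _).mpr hmem)
  have hesub : ∀ j ∈ e, 1 ≤ j ∧ j ≤ n := by
    intro j hj; rw [he] at hj; exact ⟨hj.1, hj.2.1⟩
  set π := W.mkQ with hπ
  have hmkmem : ∀ (x : U) (p : Submodule ℝ U), π x ∈ Submodule.map π p ↔ x ∈ W ⊔ p := by
    intro x p
    constructor
    · intro h
      have := Submodule.comap_map_mkQ W p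
      rw [← this]; exact h
    · intro h
      have := Submodule.comap_map_mkQ W p
      rw [← this] at h; exact h
  -- spanning
  have hspan : W ⊔ Submodule.span ℝ (X '' e) = ⊤ := by
    have step : ∀ j, j ≤ n → F j ≤ W ⊔ Submodule.span ℝ (X '' e) := by
      intro j hjn
      induction j with
      | zero => rw [hF0]; exact bot_le
      | succ k ih =>
        have hk : F k ≤ W ⊔ Submodule.span ℝ (X '' e) := ih (by omega)
        by_cases hke : (k + 1) ∈ e
        · have : F (k + 1) = F k ⊔ Submodule.span ℝ {X (k + 1)} := by
            simpa using hFeq (k + 1) (by omega) hjn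
          rw [this]
          refine sup_le hk ?_
          refine (Submodule.span_singleton_le_iff_mem _ _).mpr ?_
          exact Submodule.mem_sup_right (Submodule.subset_span ⟨k + 1, hke, rfl⟩)
        · have hns : F (k + 1) ≤ W ⊔ F k := by
            rw [he] at hke
            simp only [Set.mem_setOf_eq, not_and, not_not] at hke
            simpa using hke (by omega) hjn
          exact le_trans hns (sup_le le_sup_left hk)
    rw [eq_top_iff, ← htop]
    exact step n le_rfl
  have hrange : (Set.range fun j : e => (Submodule.Quotient.mk (X j) : U ⧸ W))
      = π '' (X '' e) := by
    ext y
    simp only [Set.mem_range, Set.mem_image]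
    constructor
    · rintro ⟨⟨j, hj⟩, rfl⟩; exact ⟨X j, ⟨j, hj, rfl⟩, rfl⟩
    · rintro ⟨x, ⟨j, hj, rfl⟩, rfl⟩; exact ⟨⟨j, hj⟩, rfl⟩
  have hspanQ : Submodule.span ℝ
      (Set.range fun j : e => (Submodule.Quotient.mk (X j) : U ⧸ W)) = ⊤ := by
    rw [hrange, ← Submodule.map_span]
    rw [Submodule.map_mkQ_eq_top]
    exact hspan
  -- linear independence
  -- each set image is independent
  have himg_sub : ∀ j ≤ n, X '' (e ∩ Set.Iic j) ⊆ (F j : Set U) := by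
    intro j hjn x hx
    obtain ⟨i, ⟨hie, hij⟩, rfl⟩ := hx
    obtain ⟨h1, hin⟩ := hesub i hie
    exact hFmono i j hij hjn (hX i h1 hin).1
  have hnotmem : ∀ j ∈ e, (π (X j)) ∉ Submodule.span ℝ (π '' (X '' (e ∩ Set.Iic (j - 1)))) := by
    intro j hje hmem
    obtain ⟨h1, hjn⟩ := hesub j hje
    have hsub : Submodule.span ℝ (π '' (X '' (e ∩ Set.Iic (j - 1)))) ≤ Submodule.map π (F (j - 1)) := by
      rw [← Submodule.map_span]
      exact Submodule.map_mono (Submodule.span_le.mpr (himg_sub (j - 1) (by omega)))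
    have := hsub hmem
    rw [hmkmem] at this
    exact hkey j hje this
  have hsetind : ∀ j, LinearIndependent ℝ
      (fun b : ↥(π '' (X '' (e ∩ Set.Iic j))) => (b : U ⧸ W)) := by
    intro j
    induction j with
    | zero =>
      have : e ∩ Set.Iic 0 = ∅ := by
        ext i; simp only [Set.mem_inter_iff, Set.mem_Iic, Nat.le_zero, Set.mem_empty_iff_false,
          iff_false, not_and]
        rintro hi rfl
        exact absurd (hesub 0 hi).1 (by omega)
      rw [this, Set.image_empty, Set.image_empty]
      exact linearIndependent_empty _ _
    | succ k ih =>
      by_cases hke : (k + 1) ∈ e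
      · have hset : e ∩ Set.Iic (k + 1) = insert (k + 1) (e ∩ Set.Iic k) := by
          ext i
          simp only [Set.mem_inter_iff, Set.mem_Iic, Set.mem_insert_iff]
          constructor
          · rintro ⟨hi, hik⟩
            rcases Nat.lt_or_ge i (k + 1) with h | h
            · exact Or.inr ⟨hi, by omega⟩
            · exact Or.inl (by omega)
          · rintro (rfl | ⟨hi, hik⟩)
            · exact ⟨hke, le_rfl⟩
            · exact ⟨hi, by omega⟩
        rw [hset, Set.image_insert_eq, Set.image_insert_eq]
        refine LinearIndepOn.id_insert ih ?_
        exact hnotmem (k + 1) hke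
      · have hset : e ∩ Set.Iic (k + 1) = e ∩ Set.Iic k := by
          ext i
          simp only [Set.mem_inter_iff, Set.mem_Iic]
          constructor
          · rintro ⟨hi, hik⟩
            rcases Nat.lt_or_ge i (k + 1) with h | h
            · exact ⟨hi, by omega⟩
            · exfalso; have hik1 : i = k + 1 := by omega
              subst hik1; exact hke hi
          · rintro ⟨hi, hik⟩; exact ⟨hi, by omega⟩
        rw [hset]; exact ih
  -- injectivity on e
  have hinj : ∀ i ∈ e, ∀ j ∈ e, π (X i) = π (X j) → i = j := by
    have key : ∀ i ∈ e, ∀ j ∈ e, i < j → π (X i) ≠ π (X j) := by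
      intro i hie j hje hij hEq
      obtain ⟨hi1, hin⟩ := hesub i hie
      obtain ⟨hj1, hjn⟩ := hesub j hje
      have hXi : X i ∈ F (j - 1) := hFmono i (j - 1) (by omega) (by omega) (hX i hi1 hin).1
      have h1 : π (X i) ∈ Submodule.map π (F (j - 1)) := ⟨X i, hXi, rfl⟩
      rw [hEq, hmkmem] at h1
      exact hkey j hje h1
    intro i hie j hje hEq
    by_contra hne
    rcases Nat.lt_or_ge i j with h | h
    · exact key i hie j hje h hEq
    · exact key j hje i hie (by omega) hEq.symm
  have heIic : e ∩ Set.Iic n = e := by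
    ext i
    simp only [Set.mem_inter_iff, Set.mem_Iic, and_iff_left_iff_imp]
    intro hi; exact (hesub i hi).2
  have hindfam : LinearIndependent ℝ
      (fun j : e => (Submodule.Quotient.mk (X j) : U ⧸ W)) := by
    have hs := hsetind n
    rw [heIic] at hs
    have hginj : Function.Injective
        (fun j : e => (⟨π (X j), ⟨X j, ⟨j, j.2, rfl⟩, rfl⟩⟩ : ↥(π '' (X '' e)))) := by
      intro a b hab
      have : π (X a) = π (X b) := congrArg Subtype.val hab
      exact Subtype.ext (hinj a a.2 b b.2 this)
    have := hs.comp _ hginj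
    exact this
  exact ⟨hindfam, hspanQ⟩
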